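/- Let (a_{kℓ})_{1≤k,ℓ≤N} be a real symmetric positive semidefinite matrix with a_{kk} = 1 for all k, and let c₁,...,c_N be nonnegative reals with ∑ c_k² = 1 and N^{-2} ≤ c_k ≤ 1 for all k. Partition {1,...,N} into the sets 𝒞_ℓ = {j : e^{-ℓ-1} < c_j ≤ e^{-ℓ}} for 0 ≤ ℓ ≤ ⌈2 log N⌉. Then ∑_{k,m=1}^N a_{km} c_k c_m ≤ (⌈2 log N⌉ + 1) · ∑_ℓ ∑_{k,m ∈ 𝒞_ℓ} a_{km} c_k c_m ≤ (⌈2 log N⌉+1) · e² · max_{1≤n≤N} sup over subsets S of size n of (1/n)·∑_{k,m∈S} a_{km}. -/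

import Mathlib

open Finset


section aux
variable {N : ℕ} (a : Fin N → Fin N → ℝ)

noncomputable def Bf (x y : Fin N → ℝ) : ℝ := ∑ k, ∑ m, a k m * x k * y m

lemma Bf_comb (α β : ℝ) (u v : Fin N → ℝ) :
    Bf a (fun k => α * u k + β * v k) (fun k => α * u k + β * v k)
      = α^2 * Bf a u u + α*β*Bf a u v + β*α*Bf a v u + β^2 * Bf a v v := by
  unfold Bf
  have h : ∀ k m : Fin N, a k m * (α*u k + β*v k) * (α*u m + β*v m)
      = α^2*(a k m*u k*u m) + α*β*(a k m*u k*v m) + β*α*(a k m*v k*u m)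
        + β^2*(a k m*v k*v m) := by intros; ring
  simp_rw [h, Finset.sum_add_distrib, ← Finset.mul_sum]

lemma Bf_symm (hsymm : ∀ k m, a k m = a m k) (u v : Fin N → ℝ) :
    Bf a u v = Bf a v u := by
  unfold Bf
  rw [Finset.sum_comm]
  refine Finset.sum_congr rfl fun m _ => Finset.sum_congr rfl fun k _ => ?_
  rw [hsymm]; ring

lemma Bf_le (hsymm : ∀ k m, a k m = a m k)
    (hpsd : ∀ x : Fin N → ℝ, 0 ≤ ∑ k, ∑ m, a k m * x k * x m) (u v : Fin N → ℝ) :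
    Bf a u v ≤ (Bf a u u + Bf a v v) / 2 := by
  have h0 : (0:ℝ) ≤ Bf a (fun k => 1 * u k + (-1) * v k) (fun k => 1 * u k + (-1) * v k) :=
    hpsd _
  rw [Bf_comb] at h0
  have hs := Bf_symm a hsymm u v
  nlinarith [h0]

lemma Bf_sum_left (s : Finset ℕ) (f : ℕ → Fin N → ℝ) (y : Fin N → ℝ) :
    Bf a (fun k => ∑ l ∈ s, f l k) y = ∑ l ∈ s, Bf a (f l) y := by
  unfold Bf
  have h : ∀ k m : Fin N, a k m * (∑ l ∈ s, f l k) * y m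
      = ∑ l ∈ s, a k m * f l k * y m := by
    intro k m; rw [Finset.mul_sum, Finset.sum_mul]
  simp_rw [h]
  rw [show (∑ k : Fin N, ∑ m : Fin N, ∑ l ∈ s, a k m * f l k * y m)
      = ∑ k : Fin N, ∑ l ∈ s, ∑ m : Fin N, a k m * f l k * y m from
    Finset.sum_congr rfl fun k _ => Finset.sum_comm]
  exact Finset.sum_comm

lemma Bf_sum_right (s : Finset ℕ) (x : Fin N → ℝ) (g : ℕ → Fin N → ℝ) :
    Bf a x (fun m => ∑ l ∈ s, g l m) = ∑ l ∈ s, Bf a x (g l) := by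
  unfold Bf
  have h : ∀ k m : Fin N, a k m * x k * (∑ l ∈ s, g l m)
      = ∑ l ∈ s, a k m * x k * g l m := by
    intro k m; rw [Finset.mul_sum]
  simp_rw [h]
  refine Eq.trans (Finset.sum_congr rfl fun k _ => Finset.sum_comm) Finset.sum_comm

lemma Bf_scale (r : ℝ) (x : Fin N → ℝ) :
    Bf a (fun k => r * x k) (fun k => r * x k) = r^2 * Bf a x x := by
  have h := Bf_comb a r 0 x x
  simpa using h


lemma Bf_ind (k m : Fin N) :
    Bf a (fun i => if i = k then (1:ℝ) else 0) (fun i => if i = m then (1:ℝ) else 0)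
      = a k m := by
  unfold Bf
  simp [mul_ite, ite_mul, mul_zero, zero_mul, mul_one]

lemma a_le_one (hsymm : ∀ k m, a k m = a m k)
    (hpsd : ∀ x : Fin N → ℝ, 0 ≤ ∑ k, ∑ m, a k m * x k * x m)
    (hdiag : ∀ k, a k k = 1) (k m : Fin N) : a k m ≤ 1 := by
  have h := Bf_le a hsymm hpsd (fun i => if i = k then (1:ℝ) else 0)
      (fun i => if i = m then (1:ℝ) else 0)
  rw [Bf_ind, Bf_ind, Bf_ind, hdiag, hdiag] at h
  linarith

lemma vertexify (hsymm : ∀ k m, a k m = a m k)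
    (hpsd : ∀ x : Fin N → ℝ, 0 ≤ ∑ k, ∑ m, a k m * x k * x m)
    (S : Finset (Fin N)) :
    ∀ t : Fin N → ℝ, (∀ k, 0 ≤ t k ∧ t k ≤ 1) → (∀ k ∉ S, t k = 0 ∨ t k = 1) →
    ∃ u : Fin N → ℝ, (∀ k, u k = 0 ∨ u k = 1) ∧ (∀ k, t k = 0 → u k = 0) ∧
      Bf a t t ≤ Bf a u u := by
  classical
  induction S using Finset.induction_on with
  | empty =>
    intro t ht h01
    exact ⟨t, fun k => h01 k (Finset.notMem_empty k), fun k h => h, le_refl _⟩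
  | @insert j S' hj ih =>
    intro t ht h01
    by_cases hj0 : t j = 0
    · refine ih t ht fun k hk => ?_
      by_cases hkj : k = j
      · left; rw [hkj]; exact hj0
      · exact h01 k (by simp [Finset.mem_insert, hkj, hk])
    · set g0 := Function.update t j 0 with hg0
      set g1 := Function.update t j 1 with hg1
      have hcomb : t = fun k => (1 - t j) * g0 k + t j * g1 k := by
        funext k
        by_cases h : k = j
        · subst h; simp [hg0, hg1, Function.update_self]
        · simp [hg0, hg1, Function.update_of_ne h]; ring
      have heq : Bf a t t = Bf a (fun k => (1 - t j) * g0 k + t j * g1 k)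
          (fun k => (1 - t j) * g0 k + t j * g1 k) := by
        conv_lhs => rw [hcomb]
      have hα : 0 ≤ 1 - t j := by linarith [(ht j).2]
      have hβ : 0 ≤ t j := (ht j).1
      have key : Bf a t t ≤ (1 - t j) * Bf a g0 g0 + t j * Bf a g1 g1 := by
        rw [heq, Bf_comb]
        have hB := Bf_le a hsymm hpsd g0 g1
        have hBs := Bf_symm a hsymm g1 g0
        nlinarith [mul_nonneg hα hβ]
      have hmax : Bf a t t ≤ max (Bf a g0 g0) (Bf a g1 g1) := by
        have h1 := le_max_left (Bf a g0 g0) (Bf a g1 g1)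
        have h2 := le_max_right (Bf a g0 g0) (Bf a g1 g1)
        nlinarith [key]
      rcases le_total (Bf a g1 g1) (Bf a g0 g0) with hc | hc
      · have hb : ∀ k, 0 ≤ g0 k ∧ g0 k ≤ 1 := by
          intro k; by_cases h : k = j
          · subst h; simp [hg0]
          · simp [hg0, Function.update_of_ne h]; exact ht k
        have hout : ∀ k ∉ S', g0 k = 0 ∨ g0 k = 1 := by
          intro k hk
          by_cases h : k = j
          · subst h; left; simp [hg0]
          · rw [hg0]; rw [Function.update_of_ne h]
            exact h01 k (by simp [Finset.mem_insert, h, hk])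
        obtain ⟨u, hu01, hu0, hule⟩ := ih g0 hb hout
        refine ⟨u, hu01, fun k hk => ?_, ?_⟩
        · apply hu0
          by_cases h : k = j
          · subst h; exact absurd hk hj0
          · rw [hg0, Function.update_of_ne h]; exact hk
        · calc Bf a t t ≤ max (Bf a g0 g0) (Bf a g1 g1) := hmax
            _ = Bf a g0 g0 := max_eq_left hc
            _ ≤ Bf a u u := hule
      · have hb : ∀ k, 0 ≤ g1 k ∧ g1 k ≤ 1 := by
          intro k; by_cases h : k = j
          · subst h; simp [hg1]
          · simp [hg1, Function.update_of_ne h]; exact ht k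
        have hout : ∀ k ∉ S', g1 k = 0 ∨ g1 k = 1 := by
          intro k hk
          by_cases h : k = j
          · subst h; right; simp [hg1]
          · rw [hg1, Function.update_of_ne h]
            exact h01 k (by simp [Finset.mem_insert, h, hk])
        obtain ⟨u, hu01, hu0, hule⟩ := ih g1 hb hout
        refine ⟨u, hu01, fun k hk => ?_, ?_⟩
        · apply hu0
          by_cases h : k = j
          · subst h; exact absurd hk hj0
          · rw [hg1, Function.update_of_ne h]; exact hk
        · calc Bf a t t ≤ max (Bf a g0 g0) (Bf a g1 g1) := hmax
            _ = Bf a g1 g1 := max_eq_right hc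
            _ ≤ Bf a u u := hule

lemma Bf_binary (u : Fin N → ℝ) (hu : ∀ k, u k = 0 ∨ u k = 1) :
    Bf a u u = ∑ k ∈ Finset.univ.filter (fun k => u k = 1),
      ∑ m ∈ Finset.univ.filter (fun k => u k = 1), a k m := by
  classical
  unfold Bf
  rw [Finset.sum_filter]
  refine Finset.sum_congr rfl fun k _ => ?_
  rcases hu k with h | h
  · simp [h]
  · rw [if_pos h, Finset.sum_filter]
    refine Finset.sum_congr rfl fun m _ => ?_
    rcases hu m with h' | h' <;> simp [h, h']

end aux

theorem stmt14 (N : ℕ) (hN : 1 ≤ N) (a : Fin N → Fin N → ℝ)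
    (hsymm : ∀ k m, a k m = a m k)
    (hpsd : ∀ x : Fin N → ℝ, 0 ≤ ∑ k, ∑ m, a k m * x k * x m)
    (hdiag : ∀ k, a k k = 1)
    (c : Fin N → ℝ) (hc0 : ∀ k, 0 ≤ c k) (hcsum : ∑ k, (c k) ^ 2 = 1)
    (hclb : ∀ k, (N : ℝ)⁻¹ ^ 2 ≤ c k) (hcub : ∀ k, c k ≤ 1) :
    (∑ k, ∑ m, a k m * c k * c m)
        ≤ ((⌈2 * Real.log N⌉₊ : ℝ) + 1) *
            ∑ l ∈ Finset.range (⌈2 * Real.log N⌉₊ + 1),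
              ∑ k ∈ Finset.univ.filter
                  (fun j => Real.exp (-(l : ℝ) - 1) < c j ∧ c j ≤ Real.exp (-(l : ℝ))),
                ∑ m ∈ Finset.univ.filter
                    (fun j => Real.exp (-(l : ℝ) - 1) < c j ∧ c j ≤ Real.exp (-(l : ℝ))),
                  a k m * c k * c m
    ∧ ((⌈2 * Real.log N⌉₊ : ℝ) + 1) *
            ∑ l ∈ Finset.range (⌈2 * Real.log N⌉₊ + 1),
              ∑ k ∈ Finset.univ.filter
                  (fun j => Real.exp (-(l : ℝ) - 1) < c j ∧ c j ≤ Real.exp (-(l : ℝ))),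
                ∑ m ∈ Finset.univ.filter
                    (fun j => Real.exp (-(l : ℝ) - 1) < c j ∧ c j ≤ Real.exp (-(l : ℝ))),
                  a k m * c k * c m
        ≤ ((⌈2 * Real.log N⌉₊ : ℝ) + 1) * Real.exp 2 *
            sSup {x : ℝ | ∃ S : Finset (Fin N), S.Nonempty ∧
              x = ((S.card : ℝ))⁻¹ * ∑ k ∈ S, ∑ m ∈ S, a k m} := by
  have hNpos : (0:ℝ) < N := by exact_mod_cast hN
  have hcpos : ∀ k, 0 < c k := fun k => lt_of_lt_of_le (by positivity) (hclb k)
  set L := ⌈2 * Real.log N⌉₊ with hLdef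
  set M := sSup {x : ℝ | ∃ S : Finset (Fin N), S.Nonempty ∧
      x = ((S.card : ℝ))⁻¹ * ∑ k ∈ S, ∑ m ∈ S, a k m} with hMdef
  -- the level-set decomposition of c
  set x : ℕ → Fin N → ℝ := fun l k =>
    if Real.exp (-(l : ℝ) - 1) < c k ∧ c k ≤ Real.exp (-(l : ℝ)) then c k else 0 with hxdef
  -- each k lies in exactly one level set
  have hfk : ∀ k : Fin N, (Finset.range (L+1)).filter
      (fun l : ℕ => Real.exp (-(l : ℝ) - 1) < c k ∧ c k ≤ Real.exp (-(l : ℝ)))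
      = {⌊-Real.log (c k)⌋₊} := by
    intro k
    set lk := ⌊-Real.log (c k)⌋₊ with hlk
    have hck := hcpos k
    have hy0 : 0 ≤ -Real.log (c k) := by
      have := Real.log_nonpos (hc0 k) (hcub k); linarith
    have hfl : (lk : ℝ) ≤ -Real.log (c k) := Nat.floor_le hy0
    have hfl2 : -Real.log (c k) < (lk : ℝ) + 1 := Nat.lt_floor_add_one _
    have hP : Real.exp (-(lk : ℝ) - 1) < c k ∧ c k ≤ Real.exp (-(lk : ℝ)) := by
      constructor
      · have h1 : -(lk : ℝ) - 1 < Real.log (c k) := by linarith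
        calc Real.exp (-(lk : ℝ) - 1) < Real.exp (Real.log (c k)) := Real.exp_lt_exp.mpr h1
          _ = c k := Real.exp_log hck
      · have h1 : Real.log (c k) ≤ -(lk : ℝ) := by linarith
        calc c k = Real.exp (Real.log (c k)) := (Real.exp_log hck).symm
          _ ≤ Real.exp (-(lk : ℝ)) := Real.exp_le_exp.mpr h1
    have hmeml : lk ∈ Finset.range (L+1) := by
      rw [Finset.mem_range, Nat.lt_succ_iff]
      have hlog : -Real.log (c k) ≤ 2 * Real.log N := by
        have h1 : Real.log ((N : ℝ)⁻¹ ^ 2) ≤ Real.log (c k) :=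
          Real.log_le_log (by positivity) (hclb k)
        have h2 : Real.log ((N : ℝ)⁻¹ ^ 2) = -(2 * Real.log N) := by
          rw [Real.log_pow, Real.log_inv]; push_cast; ring
        linarith
      calc lk ≤ ⌊2 * Real.log N⌋₊ := Nat.floor_mono hlog
        _ ≤ L := by rw [hLdef]; exact Nat.floor_le_ceil _
    rw [Finset.eq_singleton_iff_unique_mem]
    refine ⟨Finset.mem_filter.mpr ⟨hmeml, hP⟩, ?_⟩
    intro l hl
    obtain ⟨hlr, hPl⟩ := Finset.mem_filter.mp hl
    by_contra hne
    rcases Nat.lt_or_ge l lk with h | h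
    · have hcast : (l : ℝ) + 1 ≤ (lk : ℝ) := by exact_mod_cast h
      have hle : Real.exp (-(lk : ℝ)) ≤ Real.exp (-(l : ℝ) - 1) :=
        Real.exp_le_exp.mpr (by linarith)
      linarith [hP.2, hPl.1]
    · have hlt : lk < l := lt_of_le_of_ne h fun h' => hne h'.symm
      have hcast : (lk : ℝ) + 1 ≤ (l : ℝ) := by exact_mod_cast hlt
      have hle : Real.exp (-(l : ℝ)) ≤ Real.exp (-(lk : ℝ) - 1) :=
        Real.exp_le_exp.mpr (by linarith)
      linarith [hPl.2, hP.1]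
  have hxsum : ∀ k, ∑ l ∈ Finset.range (L+1), x l k = c k := by
    intro k
    rw [hxdef]
    rw [← Finset.sum_filter, hfk k, Finset.sum_singleton]
  -- identification of Bf on level sets with the filtered double sums
  have hBD : ∀ l : ℕ, Bf a (x l) (x l)
      = ∑ k ∈ Finset.univ.filter
          (fun j => Real.exp (-(l : ℝ) - 1) < c j ∧ c j ≤ Real.exp (-(l : ℝ))),
        ∑ m ∈ Finset.univ.filter
            (fun j => Real.exp (-(l : ℝ) - 1) < c j ∧ c j ≤ Real.exp (-(l : ℝ))),
          a k m * c k * c m := by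
    intro l
    show (∑ k, ∑ m, a k m * x l k * x l m) = _
    simp only [Finset.sum_filter]
    refine Finset.sum_congr rfl fun k _ => ?_
    by_cases hk : Real.exp (-(l : ℝ) - 1) < c k ∧ c k ≤ Real.exp (-(l : ℝ))
    · rw [if_pos hk]
      refine Finset.sum_congr rfl fun m _ => ?_
      by_cases hm : Real.exp (-(l : ℝ) - 1) < c m ∧ c m ≤ Real.exp (-(l : ℝ))
      · rw [if_pos hm]; simp only [hxdef, if_pos hk, if_pos hm]
      · rw [if_neg hm]; simp only [hxdef, if_pos hk, if_neg hm, mul_zero]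
    · rw [if_neg hk]
      simp only [hxdef, if_neg hk, mul_zero, zero_mul, Finset.sum_const_zero]
  -- the supremum is well behaved
  have hbdd : BddAbove {x : ℝ | ∃ S : Finset (Fin N), S.Nonempty ∧
      x = ((S.card : ℝ))⁻¹ * ∑ k ∈ S, ∑ m ∈ S, a k m} := by
    refine ⟨(N : ℝ), ?_⟩
    rintro y ⟨S, hS, rfl⟩
    have hcardpos : (0:ℝ) < S.card := by exact_mod_cast hS.card_pos
    have h1 : ∑ k ∈ S, ∑ m ∈ S, a k m ≤ (S.card : ℝ) * S.card := by
      calc ∑ k ∈ S, ∑ m ∈ S, a k m ≤ ∑ k ∈ S, ∑ m ∈ S, (1:ℝ) :=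
            Finset.sum_le_sum fun k _ => Finset.sum_le_sum fun m _ =>
              a_le_one a hsymm hpsd hdiag k m
        _ = (S.card : ℝ) * S.card := by simp [mul_comm]
    calc (S.card : ℝ)⁻¹ * ∑ k ∈ S, ∑ m ∈ S, a k m
        ≤ (S.card : ℝ)⁻¹ * ((S.card : ℝ) * S.card) :=
          mul_le_mul_of_nonneg_left h1 (by positivity)
      _ = (S.card : ℝ) := by field_simp
      _ ≤ (N : ℝ) := by
          exact_mod_cast Nat.cast_le.mpr ((Finset.card_le_univ S).trans (by simp))
  have hM0 : (0:ℝ) ≤ M := by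
    have hk0 : (1:ℝ) ∈ {x : ℝ | ∃ S : Finset (Fin N), S.Nonempty ∧
        x = ((S.card : ℝ))⁻¹ * ∑ k ∈ S, ∑ m ∈ S, a k m} := by
      refine ⟨{⟨0, hN⟩}, Finset.singleton_nonempty _, ?_⟩
      simp [hdiag]
    have := le_csSup hbdd hk0
    rw [← hMdef] at this
    linarith
  have hT : ∀ T : Finset (Fin N), ∑ k ∈ T, ∑ m ∈ T, a k m ≤ (T.card : ℝ) * M := by
    intro T
    rcases T.eq_empty_or_nonempty with rfl | hTne
    · simp
    · have hmem : ((T.card : ℝ))⁻¹ * ∑ k ∈ T, ∑ m ∈ T, a k m ∈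
          {x : ℝ | ∃ S : Finset (Fin N), S.Nonempty ∧
            x = ((S.card : ℝ))⁻¹ * ∑ k ∈ S, ∑ m ∈ S, a k m} := ⟨T, hTne, rfl⟩
      have hle := le_csSup hbdd hmem
      rw [← hMdef] at hle
      have hcardpos : (0:ℝ) < T.card := by exact_mod_cast hTne.card_pos
      calc ∑ k ∈ T, ∑ m ∈ T, a k m
          = (T.card : ℝ) * (((T.card : ℝ))⁻¹ * ∑ k ∈ T, ∑ m ∈ T, a k m) := by
            field_simp
        _ ≤ (T.card : ℝ) * M := mul_le_mul_of_nonneg_left hle (by positivity)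
  -- the per-level bound
  have hlevel : ∀ l : ℕ, Bf a (x l) (x l)
      ≤ Real.exp 2 * M * ∑ k ∈ Finset.univ.filter
          (fun j => Real.exp (-(l : ℝ) - 1) < c j ∧ c j ≤ Real.exp (-(l : ℝ))), (c k)^2 := by
    intro l
    set Cl := Finset.univ.filter
        (fun j => Real.exp (-(l : ℝ) - 1) < c j ∧ c j ≤ Real.exp (-(l : ℝ))) with hCl
    set t : Fin N → ℝ := fun k => Real.exp l * x l k with htdef
    have ht : ∀ k, 0 ≤ t k ∧ t k ≤ 1 := by
      intro k
      rw [htdef]; simp only [hxdef]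
      by_cases hk : Real.exp (-(l : ℝ) - 1) < c k ∧ c k ≤ Real.exp (-(l : ℝ))
      · rw [if_pos hk]
        refine ⟨mul_nonneg (Real.exp_pos _).le (hc0 k), ?_⟩
        calc Real.exp l * c k ≤ Real.exp l * Real.exp (-(l : ℝ)) :=
              mul_le_mul_of_nonneg_left hk.2 (Real.exp_pos _).le
          _ = 1 := by rw [← Real.exp_add]; simp
      · rw [if_neg hk]; norm_num
    have hout : ∀ k ∉ Cl, t k = 0 ∨ t k = 1 := by
      intro k hk
      left
      have hnk : ¬(Real.exp (-(l : ℝ) - 1) < c k ∧ c k ≤ Real.exp (-(l : ℝ))) := by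
        intro h; exact hk (Finset.mem_filter.mpr ⟨Finset.mem_univ k, h⟩)
      rw [htdef]; simp only [hxdef, if_neg hnk, mul_zero]
    obtain ⟨u, hu01, hu0, hle⟩ := vertexify a hsymm hpsd Cl t ht hout
    set T := Finset.univ.filter (fun k => u k = 1) with hTdef
    have hTsub : T ⊆ Cl := by
      intro k hk
      have hu1 : u k = 1 := (Finset.mem_filter.mp hk).2
      by_contra h
      have hnk : ¬(Real.exp (-(l : ℝ) - 1) < c k ∧ c k ≤ Real.exp (-(l : ℝ))) := by
        intro h'; exact h (Finset.mem_filter.mpr ⟨Finset.mem_univ k, h'⟩)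
      have ht0 : t k = 0 := by rw [htdef]; simp only [hxdef, if_neg hnk, mul_zero]
      have := hu0 k ht0
      rw [hu1] at this; norm_num at this
    have h1 : Bf a u u ≤ (T.card : ℝ) * M := by
      rw [Bf_binary a u hu01]; exact hT T
    have h2 : (T.card : ℝ) ≤ ((Cl.card : ℕ) : ℝ) := by
      exact_mod_cast Finset.card_le_card hTsub
    have hscale : Bf a t t = (Real.exp l)^2 * Bf a (x l) (x l) := Bf_scale a _ _
    have hcard : ((Cl.card : ℕ) : ℝ)
        ≤ (Real.exp l)^2 * (Real.exp 2 * ∑ k ∈ Cl, (c k)^2) := by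
      have hpt : ∀ k ∈ Cl, (1:ℝ) ≤ (Real.exp l)^2 * (Real.exp 2 * (c k)^2) := by
        intro k hk
        have hP := (Finset.mem_filter.mp hk).2
        have he : Real.exp (-(l : ℝ) - 1) < c k := hP.1
        have hp1 : (0:ℝ) < Real.exp (-(l : ℝ) - 1) := Real.exp_pos _
        have hsq : (Real.exp (-(l : ℝ) - 1))^2 ≤ (c k)^2 := by nlinarith
        have e1 : Real.exp (l : ℝ) * Real.exp (-(l : ℝ) - 1) = Real.exp (-1) := by
          rw [← Real.exp_add]; congr 1; ring
        have hid : (Real.exp (l:ℝ))^2 * (Real.exp 2 * (Real.exp (-(l : ℝ) - 1))^2) = 1 := by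
          calc (Real.exp (l:ℝ))^2 * (Real.exp 2 * (Real.exp (-(l : ℝ) - 1))^2)
              = (Real.exp (l:ℝ) * Real.exp (-(l : ℝ) - 1))^2 * Real.exp 2 := by ring
            _ = (Real.exp (-1:ℝ))^2 * Real.exp 2 := by rw [e1]
            _ = 1 := by rw [sq, ← Real.exp_add, ← Real.exp_add]; norm_num
        have hA : (0:ℝ) < (Real.exp (l:ℝ))^2 * Real.exp 2 := by positivity
        nlinarith [mul_le_mul_of_nonneg_left hsq hA.le]
      calc ((Cl.card : ℕ) : ℝ) = ∑ _k ∈ Cl, (1:ℝ) := by simp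
        _ ≤ ∑ k ∈ Cl, (Real.exp l)^2 * (Real.exp 2 * (c k)^2) := Finset.sum_le_sum hpt
        _ = (Real.exp l)^2 * (Real.exp 2 * ∑ k ∈ Cl, (c k)^2) := by
            rw [← Finset.mul_sum, ← Finset.mul_sum]
    have hfinal : (Real.exp l)^2 * Bf a (x l) (x l)
        ≤ (Real.exp l)^2 * (Real.exp 2 * M * ∑ k ∈ Cl, (c k)^2) := by
      calc (Real.exp l)^2 * Bf a (x l) (x l) = Bf a t t := hscale.symm
        _ ≤ Bf a u u := hle
        _ ≤ (T.card : ℝ) * M := h1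
        _ ≤ ((Cl.card : ℕ) : ℝ) * M := mul_le_mul_of_nonneg_right h2 hM0
        _ ≤ ((Real.exp l)^2 * (Real.exp 2 * ∑ k ∈ Cl, (c k)^2)) * M :=
            mul_le_mul_of_nonneg_right hcard hM0
        _ = (Real.exp l)^2 * (Real.exp 2 * M * ∑ k ∈ Cl, (c k)^2) := by ring
    exact le_of_mul_le_mul_left hfinal (by positivity)
  -- the squares over the level sets sum to 1
  have hsumsq : ∑ l ∈ Finset.range (L+1), ∑ k ∈ Finset.univ.filter
      (fun j => Real.exp (-(l : ℝ) - 1) < c j ∧ c j ≤ Real.exp (-(l : ℝ))), (c k)^2 = 1 := by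
    calc ∑ l ∈ Finset.range (L+1), ∑ k ∈ Finset.univ.filter
            (fun j => Real.exp (-(l : ℝ) - 1) < c j ∧ c j ≤ Real.exp (-(l : ℝ))), (c k)^2
        = ∑ l ∈ Finset.range (L+1), ∑ k : Fin N,
            if Real.exp (-(l : ℝ) - 1) < c k ∧ c k ≤ Real.exp (-(l : ℝ)) then (c k)^2 else 0 :=
          Finset.sum_congr rfl fun l _ => Finset.sum_filter _ _
      _ = ∑ k : Fin N, ∑ l ∈ Finset.range (L+1),
            if Real.exp (-(l : ℝ) - 1) < c k ∧ c k ≤ Real.exp (-(l : ℝ)) then (c k)^2 else 0 :=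
          Finset.sum_comm
      _ = ∑ k : Fin N, (c k)^2 := by
          refine Finset.sum_congr rfl fun k _ => ?_
          rw [← Finset.sum_filter, hfk k, Finset.sum_singleton]
      _ = 1 := hcsum
  constructor
  · -- first inequality
    have hc_eq : Bf a c c = ∑ l ∈ Finset.range (L+1), ∑ l' ∈ Finset.range (L+1),
        Bf a (x l) (x l') := by
      have hcc : c = fun k => ∑ l ∈ Finset.range (L+1), x l k :=
        funext fun k => (hxsum k).symm
      calc Bf a c c = Bf a (fun k => ∑ l ∈ Finset.range (L+1), x l k)
            (fun k => ∑ l ∈ Finset.range (L+1), x l k) := by rw [← hcc]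
        _ = ∑ l ∈ Finset.range (L+1), Bf a (x l)
              (fun k => ∑ l' ∈ Finset.range (L+1), x l' k) := Bf_sum_left a _ _ _
        _ = ∑ l ∈ Finset.range (L+1), ∑ l' ∈ Finset.range (L+1), Bf a (x l) (x l') :=
            Finset.sum_congr rfl fun l _ => Bf_sum_right a _ _ _
    have hCS : ∑ l ∈ Finset.range (L+1), ∑ l' ∈ Finset.range (L+1), Bf a (x l) (x l')
        ≤ ((L : ℝ) + 1) * ∑ l ∈ Finset.range (L+1), Bf a (x l) (x l) := by
      calc ∑ l ∈ Finset.range (L+1), ∑ l' ∈ Finset.range (L+1), Bf a (x l) (x l')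
          ≤ ∑ l ∈ Finset.range (L+1), ∑ l' ∈ Finset.range (L+1),
              (Bf a (x l) (x l) + Bf a (x l') (x l')) / 2 :=
            Finset.sum_le_sum fun l _ => Finset.sum_le_sum fun l' _ =>
              Bf_le a hsymm hpsd _ _
        _ = ((L : ℝ) + 1) * ∑ l ∈ Finset.range (L+1), Bf a (x l) (x l) := by
            simp only [← Finset.sum_div, Finset.sum_add_distrib, Finset.sum_const,
              Finset.card_range, nsmul_eq_mul, ← Finset.mul_sum]
            push_cast
            ring
    calc (∑ k, ∑ m, a k m * c k * c m) = Bf a c c := rfl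
      _ = ∑ l ∈ Finset.range (L+1), ∑ l' ∈ Finset.range (L+1), Bf a (x l) (x l') := hc_eq
      _ ≤ ((L : ℝ) + 1) * ∑ l ∈ Finset.range (L+1), Bf a (x l) (x l) := hCS
      _ = ((L : ℝ) + 1) * ∑ l ∈ Finset.range (L+1),
            ∑ k ∈ Finset.univ.filter
                (fun j => Real.exp (-(l : ℝ) - 1) < c j ∧ c j ≤ Real.exp (-(l : ℝ))),
              ∑ m ∈ Finset.univ.filter
                  (fun j => Real.exp (-(l : ℝ) - 1) < c j ∧ c j ≤ Real.exp (-(l : ℝ))),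
                a k m * c k * c m := by
          rw [Finset.sum_congr rfl fun l _ => hBD l]
  · -- second inequality
    rw [mul_assoc]
    refine mul_le_mul_of_nonneg_left ?_ (by positivity)
    calc ∑ l ∈ Finset.range (L+1),
            ∑ k ∈ Finset.univ.filter
                (fun j => Real.exp (-(l : ℝ) - 1) < c j ∧ c j ≤ Real.exp (-(l : ℝ))),
              ∑ m ∈ Finset.univ.filter
                  (fun j => Real.exp (-(l : ℝ) - 1) < c j ∧ c j ≤ Real.exp (-(l : ℝ))),
                a k m * c k * c m
        = ∑ l ∈ Finset.range (L+1), Bf a (x l) (x l) :=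
          Finset.sum_congr rfl fun l _ => (hBD l).symm
      _ ≤ ∑ l ∈ Finset.range (L+1), Real.exp 2 * M * ∑ k ∈ Finset.univ.filter
            (fun j => Real.exp (-(l : ℝ) - 1) < c j ∧ c j ≤ Real.exp (-(l : ℝ))), (c k)^2 :=
          Finset.sum_le_sum fun l _ => hlevel l
      _ = Real.exp 2 * M * ∑ l ∈ Finset.range (L+1), ∑ k ∈ Finset.univ.filter
            (fun j => Real.exp (-(l : ℝ) - 1) < c j ∧ c j ≤ Real.exp (-(l : ℝ))), (c k)^2 := by
          rw [← Finset.mul_sum]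
      _ = Real.exp 2 * M := by rw [hsumsq, mul_one]
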